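/- Let (j_t, f_t)_{t≥0} be a time-homogeneous Markov chain on ℤ × F with F a finite set, such that the increment J_t = j_{t+1} - j_t depends (in distribution, and in particular in expectation) only on f_t, i.e. E[J_t | f_t = f, j_t = k] = E[j_1 | f_0 = f, j_0 = 0] for all f, k, t. If the limit R = lim_{t→∞} E[J_t] exists and is finite, then R ≥ min over f ∈ F of max( E[J_t | f_t = f], (1/2)·E[J_t + J_{t+1} | f_t = f] ). -/

import Mathlib

open MeasureTheory ProbabilityTheory Filter

lemma aux_integrable {α : Type*} [MeasurableSpace α] [Countable α]
    [MeasurableSingletonClass α] (ν : Measure α) [IsFiniteMeasure ν]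
    (h : α → ℝ) (C : ℝ) (hC : ∀ x, |h x| ≤ C) : Integrable h ν := by
  refine Integrable.mono' (integrable_const C)
    (measurable_of_countable h).aestronglyMeasurable (ae_of_all _ fun x => ?_)
  simpa [Real.norm_eq_abs] using hC x

lemma aux_bind_eq_map {α : Type*} [MeasurableSpace α]
    (ν : Measure α) [IsProbabilityMeasure ν] (κ : Kernel α α) [IsMarkovKernel κ] :
    ν.bind (fun p => κ p) = (ν.compProd κ).map Prod.snd := by
  ext s hs
  rw [Measure.bind_apply hs (Kernel.measurable κ).aemeasurable,
    Measure.map_apply measurable_snd hs, Measure.compProd_apply (measurable_snd hs)]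
  rfl

lemma aux_bind_integral {α : Type*} [MeasurableSpace α] [Countable α]
    [MeasurableSingletonClass α] (ν : Measure α) [IsProbabilityMeasure ν]
    (κ : Kernel α α) [IsMarkovKernel κ]
    (h : α → ℝ) (C : ℝ) (hC : ∀ x, |h x| ≤ C) :
    ∫ p, h p ∂(ν.bind (fun p => κ p)) = ∫ p, ∫ q, h q ∂(κ p) ∂ν := by
  have hint : Integrable (fun p : α × α => h p.2) (ν.compProd κ) := by
    have : IsFiniteMeasure (ν.compProd κ) := by
      constructor
      rw [Measure.compProd_apply_univ]
      exact measure_lt_top _ _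
    exact aux_integrable _ _ C (fun x => hC x.2)
  rw [aux_bind_eq_map ν κ,
    integral_map measurable_snd.aemeasurable (measurable_of_countable h).aestronglyMeasurable,
    Measure.integral_compProd hint]

theorem stmt0 {F : Type*} [Fintype F] [Nonempty F] [MeasurableSpace F]
    [MeasurableSingletonClass F]
    (κ : Kernel (ℤ × F) (ℤ × F)) [IsMarkovKernel κ]
    (μ : ℕ → Measure (ℤ × F)) [∀ t, IsProbabilityMeasure (μ t)]
    (hchain : ∀ t, μ (t + 1) = (μ t).bind (fun p => κ p))
    (g : F → ℝ)
    (hg : ∀ p : ℤ × F, (∫ q, ((q.1 - p.1 : ℤ) : ℝ) ∂(κ p)) = g p.2)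
    (g2 : F → ℝ)
    (hg2 : ∀ p : ℤ × F, (∫ q, (((q.1 - p.1 : ℤ) : ℝ) + g q.2) ∂(κ p)) = g2 p.2)
    (R : ℝ)
    (hR : Tendsto (fun t => ∫ p, g p.2 ∂(μ t)) atTop (nhds R)) :
    R ≥ Finset.univ.inf' Finset.univ_nonempty
      (fun f => max (g f) ((1 / 2) * g2 f)) := by
  classical
  set m : ℝ := Finset.univ.inf' Finset.univ_nonempty
      (fun f => max (g f) ((1 / 2) * g2 f)) with hm
  set φ : F → ℝ := fun f => max 0 (m - g f) with hφdef
  have hmle : ∀ f, m ≤ max (g f) ((1 / 2) * g2 f) := fun f =>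
    Finset.inf'_le _ (Finset.mem_univ f)
  have hgφ : ∀ f, g f + φ f = max (g f) m := by
    intro f
    rcases le_total (g f) m with h | h
    · have h1 : φ f = m - g f := max_eq_right (by linarith)
      rw [h1, max_eq_right h]; ring
    · have h1 : φ f = 0 := max_eq_left (by linarith)
      rw [h1, max_eq_left h]; ring
  -- bounds
  obtain ⟨Cg, hCg⟩ : ∃ C, ∀ f, |g f| ≤ C :=
    ⟨Finset.univ.sup' Finset.univ_nonempty (fun f => |g f|),
      fun f => Finset.le_sup' (fun x => |g x|) (Finset.mem_univ f)⟩
  obtain ⟨Cφ, hCφ⟩ : ∃ C, ∀ f, |φ f| ≤ C :=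
    ⟨Finset.univ.sup' Finset.univ_nonempty (fun f => |φ f|),
      fun f => Finset.le_sup' (fun x => |φ x|) (Finset.mem_univ f)⟩
  have hφnn : ∀ f, 0 ≤ φ f := fun f => le_max_left _ _
  have hφB : ∀ f, φ f ≤ Cφ := fun f => (le_abs_self _).trans (hCφ f)
  -- integrability facts over any probability measure on ℤ × F
  have hintg : ∀ (ν : Measure (ℤ × F)), IsProbabilityMeasure ν →
      Integrable (fun p : ℤ × F => g p.2) ν := fun ν hν =>
    letI := hν; aux_integrable ν _ Cg (fun x => hCg x.2)
  have hintφ : ∀ (ν : Measure (ℤ × F)), IsProbabilityMeasure ν →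
      Integrable (fun p : ℤ × F => φ p.2) ν := fun ν hν =>
    letI := hν; aux_integrable ν _ Cφ (fun x => hCφ x.2)
  -- pointwise key inequality
  have key : ∀ p : ℤ × F, m + φ p.2 ≤ ∫ q, (g q.2 + φ q.2) ∂(κ p) := by
    intro p
    have hgφint : Integrable (fun q : ℤ × F => g q.2 + φ q.2) (κ p) :=
      aux_integrable _ _ (Cg + Cφ)
        (fun x => (abs_add_le _ _).trans (add_le_add (hCg x.2) (hCφ x.2)))
    by_cases hcase : m ≤ g p.2
    · have hφ0 : φ p.2 = 0 := max_eq_left (by linarith)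
      rw [hφ0, add_zero]
      calc m = ∫ _, m ∂(κ p) := by simp
        _ ≤ ∫ q, (g q.2 + φ q.2) ∂(κ p) := by
            refine integral_mono (integrable_const m) hgφint (fun q => ?_)
            rw [hgφ q.2]; exact le_max_right _ _
    · push_neg at hcase
      have h2m : 2 * m ≤ g2 p.2 := by
        rcases max_cases (g p.2) ((1 / 2) * g2 p.2) with ⟨he, _⟩ | ⟨he, _⟩
        · linarith [hmle p.2]
        · have := hmle p.2; rw [he] at this; linarith
      have hφval : φ p.2 = m - g p.2 := max_eq_right (by linarith)
      set J : (ℤ × F) → ℝ := fun q => ((q.1 - p.1 : ℤ) : ℝ) with hJdef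
      by_cases hJ : Integrable J (κ p)
      · have hgi : Integrable (fun q : ℤ × F => g q.2) (κ p) :=
          aux_integrable _ _ Cg (fun x => hCg x.2)
        have hsum : ∫ q, (J q + g q.2) ∂(κ p) = g p.2 + ∫ q, g q.2 ∂(κ p) := by
          rw [integral_add hJ hgi, hg p]
        have hgnext : ∫ q, g q.2 ∂(κ p) = g2 p.2 - g p.2 := by
          have := hg2 p
          rw [show (fun q : ℤ × F => (((q.1 - p.1 : ℤ) : ℝ) + g q.2)) =
            (fun q => J q + g q.2) from rfl] at this
          linarith [hsum.symm.trans this]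
        calc m + φ p.2 = 2 * m - g p.2 := by rw [hφval]; ring
          _ ≤ g2 p.2 - g p.2 := by linarith
          _ = ∫ q, g q.2 ∂(κ p) := hgnext.symm
          _ ≤ ∫ q, (g q.2 + φ q.2) ∂(κ p) :=
            integral_mono hgi hgφint (fun q => le_add_of_nonneg_right (hφnn q.2))
      · exfalso
        have hgi : Integrable (fun q : ℤ × F => g q.2) (κ p) :=
          aux_integrable _ _ Cg (fun x => hCg x.2)
        have hns : ¬ Integrable (fun q => J q + g q.2) (κ p) := by
          intro hsum
          have h' := hsum.sub hgi
          refine hJ ?_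
          convert h' using 1
          ext q; simp
        have h1 : g2 p.2 = 0 := by
          rw [← hg2 p]
          exact integral_undef hns
        have h2 : g p.2 = 0 := by
          rw [← hg p]
          exact integral_undef hJ
        rw [h1] at h2m
        rw [h2] at hcase
        linarith
  -- the step inequality
  set a : ℕ → ℝ := fun t => ∫ p, g p.2 ∂(μ t) with hadef
  set Φ : ℕ → ℝ := fun t => ∫ p, φ p.2 ∂(μ t) with hΦdef
  have hΦub : ∀ t, Φ t ≤ Cφ := by
    intro t
    calc Φ t ≤ ∫ _, Cφ ∂(μ t) :=
          integral_mono (hintφ _ inferInstance) (integrable_const _) (fun p => hφB p.2)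
      _ = Cφ := by simp
  have step : ∀ t, m + Φ t ≤ a (t + 1) + Φ (t + 1) := by
    intro t
    have hbind : ∫ p, (g p.2 + φ p.2) ∂(μ (t + 1))
        = ∫ p, ∫ q, (g q.2 + φ q.2) ∂(κ p) ∂(μ t) := by
      rw [hchain t]
      exact aux_bind_integral (μ t) κ _ (Cg + Cφ)
        (fun x => (abs_add_le _ _).trans (add_le_add (hCg x.2) (hCφ x.2)))
    have hsplit : ∫ p, (g p.2 + φ p.2) ∂(μ (t + 1)) = a (t + 1) + Φ (t + 1) :=
      integral_add (hintg _ inferInstance) (hintφ _ inferInstance)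
    have hlow : m + Φ t ≤ ∫ p, ∫ q, (g q.2 + φ q.2) ∂(κ p) ∂(μ t) := by
      have hrhs : Integrable (fun p => ∫ q, (g q.2 + φ q.2) ∂(κ p)) (μ t) := by
        refine aux_integrable _ _ (Cg + Cφ) (fun p => ?_)
        have := norm_integral_le_of_norm_le_const (μ := κ p)
          (f := fun q : ℤ × F => g q.2 + φ q.2) (C := Cg + Cφ)
          (ae_of_all _ fun q => by
            simpa [Real.norm_eq_abs] using
              (abs_add_le _ _).trans (add_le_add (hCg q.2) (hCφ q.2)))
        simpa [Real.norm_eq_abs] using this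
      have hlhs : Integrable (fun p : ℤ × F => m + φ p.2) (μ t) :=
        (integrable_const m).add (hintφ _ inferInstance)
      calc m + Φ t = ∫ p, (m + φ p.2) ∂(μ t) := by
            rw [integral_add (integrable_const m) (hintφ _ inferInstance)]; simp; rfl
        _ ≤ _ := integral_mono hlhs hrhs (fun p => key p)
    rw [← hsplit, hbind]
    exact hlow
  -- conclude
  by_contra hcon
  push_neg at hcon
  set δ : ℝ := (m - R) / 2 with hδdef
  have hδpos : 0 < δ := by simp [hδdef]; linarith
  have hRlt : R < m - δ := by rw [hδdef]; linarith
  obtain ⟨N, hN⟩ := (eventually_atTop.mp (hR.eventually_lt_const hRlt))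
  have grow : ∀ k : ℕ, Φ N + k * δ ≤ Φ (N + k) := by
    intro k
    induction k with
    | zero => simp
    | succ k ih =>
      have h1 : a (N + k + 1) < m - δ := hN _ (by omega)
      have h2 := step (N + k)
      have : Φ (N + k) + δ ≤ Φ (N + k + 1) := by linarith
      push_cast
      calc Φ N + (k + 1) * δ = (Φ N + k * δ) + δ := by ring
        _ ≤ Φ (N + k) + δ := by linarith
        _ ≤ Φ (N + (k + 1)) := by rw [show N + (k + 1) = N + k + 1 by ring]; exact this
  obtain ⟨k, hk⟩ := exists_nat_gt ((Cφ - Φ N) / δ)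
  have : Cφ - Φ N < k * δ := by
    rw [div_lt_iff₀ hδpos] at hk
    linarith
  have := (grow k).trans (hΦub (N + k))
  linarith
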